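/- The negative L¹-distance kernel on PIFs, k₁(D₁,D₂) := −∫_ℝ |PIF_{D₁}(x) − PIF_{D₂}(x)| dx, is conditionally positive definite: for any finite collection of persistence diagrams D₁,…,Dₙ and real coefficients a₁,…,aₙ with Σᵢ aᵢ = 0, we have Σᵢ Σⱼ aᵢ aⱼ k₁(Dᵢ, Dⱼ) ≥ 0. -/

import Mathlib

open MeasureTheory

noncomputable def PIF (D : Multiset (ℝ × ℝ)) (ε : ℝ) : ℕ :=
  Multiset.card (D.filter (fun p => p.1 ≤ ε ∧ ε ≤ p.2))

lemma PIF_cons (q : ℝ × ℝ) (D : Multiset (ℝ × ℝ)) (x : ℝ) :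
    (PIF (q ::ₘ D) x : ℝ) = (Set.Icc q.1 q.2).indicator (fun _ => (1:ℝ)) x + PIF D x := by
  simp only [PIF, Multiset.filter_cons, Set.indicator_apply, Set.mem_Icc]
  split <;> simp [add_comm]

lemma pif_measurable (D : Multiset (ℝ × ℝ)) : Measurable (fun x => (PIF D x : ℝ)) := by
  induction D using Multiset.induction with
  | empty => simpa [PIF] using measurable_const
  | cons q D ih =>
    simp only [PIF_cons]
    exact ((measurable_const.indicator measurableSet_Icc)).add ih

lemma pif_integrable (D : Multiset (ℝ × ℝ)) : Integrable (fun x => (PIF D x : ℝ)) := by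
  induction D using Multiset.induction with
  | empty => simpa [PIF] using integrable_zero ℝ ℝ volume
  | cons q D ih =>
    simp only [PIF_cons]
    refine Integrable.add ?_ ih
    exact (integrable_indicator_iff measurableSet_Icc).2
      (integrableOn_const measure_Icc_lt_top.ne)

lemma sum_ite_lt (N k : ℕ) (hk : k ≤ N) :
    ∑ t ∈ Finset.range N, (if t < k then (1:ℝ) else 0) = k := by
  have h : (Finset.range N).filter (fun t => t < k) = Finset.range k := by
    ext t; simp; omega
  rw [← Finset.sum_filter, h]
  simp

lemma key_nonneg (n : ℕ) (m : Fin n → ℕ) (a : Fin n → ℝ) :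
    0 ≤ ∑ i, ∑ j, a i * a j * (min (m i) (m j) : ℝ) := by
  obtain ⟨N, hN⟩ : ∃ N, ∀ i, m i ≤ N :=
    ⟨Finset.univ.sup m, fun i => Finset.le_sup (Finset.mem_univ i)⟩
  set c : Fin n → ℕ → ℝ := fun i t => if t < m i then 1 else 0 with hc
  have hmin : ∀ i j, (min (m i) (m j) : ℝ) = ∑ t ∈ Finset.range N, c i t * c j t := by
    intro i j
    have h1 : ∀ t : ℕ, c i t * c j t = (if t < min (m i) (m j) then (1:ℝ) else 0) := by
      intro t; by_cases h1 : t < m i <;> by_cases h2 : t < m j <;>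
        simp [hc, h1, h2, lt_min_iff]
    rw [← Nat.cast_min]
    simp only [h1]
    rw [sum_ite_lt N _ (le_trans (min_le_left _ _) (hN i))]
  have key : ∑ i, ∑ j, a i * a j * (min (m i) (m j) : ℝ)
      = ∑ t ∈ Finset.range N, (∑ i, a i * c i t)^2 := by
    calc ∑ i, ∑ j, a i * a j * (min (m i) (m j) : ℝ)
        = ∑ i, ∑ j, ∑ t ∈ Finset.range N, (a i * c i t) * (a j * c j t) := by
          refine Finset.sum_congr rfl fun i _ => Finset.sum_congr rfl fun j _ => ?_
          rw [hmin i j, Finset.mul_sum]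
          exact Finset.sum_congr rfl fun t _ => by ring
      _ = ∑ i, ∑ t ∈ Finset.range N, ∑ j, (a i * c i t) * (a j * c j t) := by
          exact Finset.sum_congr rfl fun i _ => Finset.sum_comm
      _ = ∑ t ∈ Finset.range N, ∑ i, ∑ j, (a i * c i t) * (a j * c j t) :=
          Finset.sum_comm
      _ = ∑ t ∈ Finset.range N, (∑ i, a i * c i t)^2 := by
          refine Finset.sum_congr rfl fun t _ => ?_
          rw [sq, Finset.sum_mul_sum]
  rw [key]
  positivity

/-- The negative `L¹`-distance kernel on PIFs. -/
noncomputable def pifKernel (D₁ D₂ : Multiset (ℝ × ℝ)) : ℝ :=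
  -∫ x, |(PIF D₁ x : ℝ) - (PIF D₂ x : ℝ)|

lemma min_integrable (D₁ D₂ : Multiset (ℝ × ℝ)) :
    Integrable (fun x => min (PIF D₁ x : ℝ) (PIF D₂ x : ℝ)) := by
  refine Integrable.mono' (pif_integrable D₁)
    (((pif_measurable D₁).min (pif_measurable D₂)).aestronglyMeasurable)
    (ae_of_all _ fun x => ?_)
  rw [Real.norm_eq_abs, abs_of_nonneg (le_min (Nat.cast_nonneg _) (Nat.cast_nonneg _))]
  exact min_le_left _ _

lemma pifKernel_eq (D₁ D₂ : Multiset (ℝ × ℝ)) :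
    pifKernel D₁ D₂ = -(∫ x, (PIF D₁ x : ℝ)) - (∫ x, (PIF D₂ x : ℝ))
      + 2 * ∫ x, min (PIF D₁ x : ℝ) (PIF D₂ x : ℝ) := by
  have habs : ∀ u v : ℝ, |u - v| = u + v - 2 * min u v := by
    intro u v
    rcases le_total u v with h | h
    · rw [min_eq_left h, abs_of_nonpos (by linarith)]; ring
    · rw [min_eq_right h, abs_of_nonneg (by linarith)]; ring
  have hadd : Integrable (fun x => (PIF D₁ x : ℝ) + (PIF D₂ x : ℝ)) :=
    (pif_integrable D₁).add (pif_integrable D₂)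
  unfold pifKernel
  simp only [habs]
  rw [integral_sub hadd ((min_integrable D₁ D₂).const_mul 2),
    integral_add (pif_integrable D₁) (pif_integrable D₂),
    integral_const_mul]
  ring

/-- The kernel `k₁(D₁, D₂) = -‖PIF_{D₁} - PIF_{D₂}‖₁` is conditionally
positive definite. -/
theorem pifKernel_conditionally_positive_definite (n : ℕ)
    (D : Fin n → Multiset (ℝ × ℝ)) (hD : ∀ i, ∀ q ∈ D i, q.1 ≤ q.2)
    (a : Fin n → ℝ) (ha : ∑ i, a i = 0) :
    0 ≤ ∑ i, ∑ j, a i * a j * pifKernel (D i) (D j) := by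
  have h1 : ∑ i, ∑ j, a i * a j * (∫ x, (PIF (D i) x : ℝ)) = 0 := by
    have h : ∀ i : Fin n, ∑ j, a i * a j * (∫ x, (PIF (D i) x : ℝ))
        = (a i * ∫ x, (PIF (D i) x : ℝ)) * ∑ j, a j := by
      intro i
      rw [Finset.mul_sum]
      exact Finset.sum_congr rfl fun j _ => by ring
    simp [h, ha]
  have h2 : ∑ i : Fin n, ∑ j, a i * a j * (∫ x, (PIF (D j) x : ℝ)) = 0 := by
    rw [Finset.sum_comm]
    have h : ∀ j : Fin n, ∑ i, a i * a j * (∫ x, (PIF (D j) x : ℝ))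
        = (a j * ∫ x, (PIF (D j) x : ℝ)) * ∑ i, a i := by
      intro j
      rw [Finset.mul_sum]
      exact Finset.sum_congr rfl fun i _ => by ring
    simp [h, ha]
  have hterm : ∀ i j, a i * a j * pifKernel (D i) (D j)
      = 2 * (a i * a j * ∫ x, min (PIF (D i) x : ℝ) (PIF (D j) x : ℝ))
        - a i * a j * (∫ x, (PIF (D i) x : ℝ))
        - a i * a j * (∫ x, (PIF (D j) x : ℝ)) := by
    intro i j
    rw [pifKernel_eq]
    ring
  have hMint : ∑ i, ∑ j, a i * a j * (∫ x, min (PIF (D i) x : ℝ) (PIF (D j) x : ℝ))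
      = ∫ x, ∑ i, ∑ j, a i * a j * min (PIF (D i) x : ℝ) (PIF (D j) x : ℝ) := by
    rw [integral_finset_sum _ (fun i _ => integrable_finset_sum _
      (fun j _ => ((min_integrable (D i) (D j)).const_mul (a i * a j))))]
    refine Finset.sum_congr rfl fun i _ => ?_
    rw [integral_finset_sum _
      (fun j _ => ((min_integrable (D i) (D j)).const_mul (a i * a j)))]
    exact Finset.sum_congr rfl fun j _ => (integral_const_mul _ _).symm
  calc (0:ℝ) ≤ 2 * ∫ x, ∑ i, ∑ j, a i * a j
        * min (PIF (D i) x : ℝ) (PIF (D j) x : ℝ) := by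
        refine mul_nonneg (by norm_num) (integral_nonneg fun x => ?_)
        exact key_nonneg n (fun i => PIF (D i) x) a
    _ = ∑ i, ∑ j, a i * a j * pifKernel (D i) (D j) := by
        simp only [hterm, Finset.sum_sub_distrib, ← Finset.mul_sum, h1, h2, hMint]
        ring
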